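/- Let Ω be an index set, A = ℝ[x_i : i ∈ Ω] the polynomial ℝ-algebra, V ⊆ A the ℝ-linear span of the variables (the degree-one homogeneous polynomials), and ρ a seminorm on V. Then the projective extension ρ̄ of ρ to A is a submultiplicative seminorm on A: ρ̄ is a seminorm and ρ̄(f·g) ≤ ρ̄(f)·ρ̄(g) for all f, g ∈ A. Moreover ρ̄ restricted to V equals ρ. -/

import Mathlib

open MvPolynomial

/-- `V`: the `ℝ`-linear span of the variables (degree-one homogeneous polynomials) inside
the polynomial algebra `A = ℝ[x_i : i ∈ Ω]`. -/
noncomputable def Vars (Ω : Type*) : Submodule ℝ (MvPolynomial Ω ℝ) :=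
  Submodule.span ℝ (Set.range (X : Ω → MvPolynomial Ω ℝ))

/-- `ρ̄_k(h)` for `k ≥ 1`: the infimum of `Σ_{i=1}^N ρ(f_{i1})⋯ρ(f_{ik})` over all
representations `h = Σ_{i=1}^N f_{i1}⋯f_{ik}` with `f_{ij} ∈ V`. -/
noncomputable def projExtHomog {Ω : Type*} (ρ : Seminorm ℝ ↥(Vars Ω)) (k : ℕ)
    (h : MvPolynomial Ω ℝ) : ℝ :=
  sInf {r : ℝ | ∃ (N : ℕ) (f : Fin N → Fin k → ↥(Vars Ω)),
    h = ∑ i, ∏ j, ((f i j : MvPolynomial Ω ℝ)) ∧ r = ∑ i, ∏ j, ρ (f i j)}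

/-- The projective extension `ρ̄` of a seminorm `ρ` on `V` to the polynomial algebra:
`ρ̄(h) = Σ_k ρ̄_k(h_k)` where `h_k` is the degree-`k` homogeneous component of `h` and
`ρ̄_0` is the absolute value on the constants. -/
noncomputable def projExt {Ω : Type*} (ρ : Seminorm ℝ ↥(Vars Ω))
    (h : MvPolynomial Ω ℝ) : ℝ :=
  |MvPolynomial.coeff 0 h| +
    ∑ k ∈ Finset.Icc 1 h.totalDegree,
      projExtHomog ρ k (MvPolynomial.homogeneousComponent k h)

namespace ProjExtAux

variable {Ω : Type*} (ρ : Seminorm ℝ ↥(Vars Ω))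

def repSet (k : ℕ) (h : MvPolynomial Ω ℝ) : Set ℝ :=
  {r : ℝ | ∃ (N : ℕ) (f : Fin N → Fin k → ↥(Vars Ω)),
    h = ∑ i, ∏ j, ((f i j : MvPolynomial Ω ℝ)) ∧ r = ∑ i, ∏ j, ρ (f i j)}

lemma projExtHomog_def (k : ℕ) (h : MvPolynomial Ω ℝ) :
    projExtHomog ρ k h = sInf (repSet ρ k h) := rfl

variable {ρ}

lemma nonneg_of_mem {k : ℕ} {h : MvPolynomial Ω ℝ} {r : ℝ} (hr : r ∈ repSet ρ k h) :
    0 ≤ r := by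
  obtain ⟨N, f, -, rfl⟩ := hr
  exact Finset.sum_nonneg fun i _ => Finset.prod_nonneg fun j _ => apply_nonneg _ _

lemma bddBelow_repSet (k : ℕ) (h : MvPolynomial Ω ℝ) : BddBelow (repSet ρ k h) :=
  ⟨0, fun _ hr => nonneg_of_mem hr⟩

lemma Q_nonneg (k : ℕ) (h : MvPolynomial Ω ℝ) : 0 ≤ projExtHomog ρ k h :=
  Real.sInf_nonneg fun _ hr => nonneg_of_mem hr

lemma zero_mem_repSet (k : ℕ) : (0 : ℝ) ∈ repSet ρ k 0 :=
  ⟨0, Fin.elim0, by simp, by simp⟩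

lemma Q_le_of_mem {k : ℕ} {h : MvPolynomial Ω ℝ} {r : ℝ} (hr : r ∈ repSet ρ k h) :
    projExtHomog ρ k h ≤ r :=
  csInf_le (bddBelow_repSet k h) hr

lemma Q_zero (k : ℕ) : projExtHomog ρ k (0 : MvPolynomial Ω ℝ) = 0 :=
  le_antisymm (Q_le_of_mem (zero_mem_repSet k)) (Q_nonneg k 0)

lemma add_mem_repSet {k : ℕ} {h₁ h₂ : MvPolynomial Ω ℝ} {r₁ r₂ : ℝ}
    (h1 : r₁ ∈ repSet ρ k h₁) (h2 : r₂ ∈ repSet ρ k h₂) :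
    r₁ + r₂ ∈ repSet ρ k (h₁ + h₂) := by
  obtain ⟨N₁, f, rfl, rfl⟩ := h1
  obtain ⟨N₂, g, rfl, rfl⟩ := h2
  exact ⟨N₁ + N₂, Fin.append f g, by rw [Fin.sum_univ_add]; simp,
    by rw [Fin.sum_univ_add]; simp⟩

lemma mul_mem_repSet {k l : ℕ} {h₁ h₂ : MvPolynomial Ω ℝ} {r₁ r₂ : ℝ}
    (h1 : r₁ ∈ repSet ρ k h₁) (h2 : r₂ ∈ repSet ρ l h₂) :
    r₁ * r₂ ∈ repSet ρ (k + l) (h₁ * h₂) := by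
  obtain ⟨N₁, f, rfl, rfl⟩ := h1
  obtain ⟨N₂, g, rfl, rfl⟩ := h2
  refine ⟨N₁ * N₂, fun i => Fin.append (f (finProdFinEquiv.symm i).1)
    (g (finProdFinEquiv.symm i).2), ?_, ?_⟩
  · rw [Finset.sum_mul_sum, ← Equiv.sum_comp finProdFinEquiv, Fintype.sum_prod_type]
    refine Finset.sum_congr rfl fun a _ => Finset.sum_congr rfl fun b _ => ?_
    simp [Fin.prod_univ_add]
  · rw [Finset.sum_mul_sum, ← Equiv.sum_comp finProdFinEquiv, Fintype.sum_prod_type]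
    refine Finset.sum_congr rfl fun a _ => Finset.sum_congr rfl fun b _ => ?_
    simp [Fin.prod_univ_add]

lemma smul_mem_repSet {k : ℕ} {h : MvPolynomial Ω ℝ} {r : ℝ} (c : ℝ)
    (hr : r ∈ repSet ρ (k + 1) h) : |c| * r ∈ repSet ρ (k + 1) (c • h) := by
  obtain ⟨N, f, rfl, rfl⟩ := hr
  refine ⟨N, fun i => Fin.cons (c • f i 0) (fun j => f i j.succ), ?_, ?_⟩
  · rw [Finset.smul_sum]
    refine Finset.sum_congr rfl fun i _ => ?_
    rw [Fin.prod_univ_succ, Fin.prod_univ_succ]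
    simp [Submodule.coe_smul, smul_mul_assoc]
  · rw [Finset.mul_sum]
    refine Finset.sum_congr rfl fun i _ => ?_
    rw [Fin.prod_univ_succ, Fin.prod_univ_succ]
    simp [map_smul_eq_mul, Real.norm_eq_abs, mul_assoc]

lemma X_mem_Vars (i : Ω) : (X i : MvPolynomial Ω ℝ) ∈ Vars Ω :=
  Submodule.subset_span ⟨i, rfl⟩

lemma exists_prod_X {k : ℕ} (d : Ω →₀ ℕ) (hd : d.degree = k) :
    ∃ g : Fin k → Ω, (monomial d (1 : ℝ)) = ∏ j, X (g j) := by
  classical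
  have hlen : d.toMultiset.toList.length = k := by
    rw [Multiset.length_toList, Finsupp.card_toMultiset, ← hd, Finsupp.degree]
    simp [Finsupp.sum]; rfl
  refine ⟨fun j => d.toMultiset.toList.get (Fin.cast hlen.symm j), ?_⟩
  have h1 : ∏ j : Fin k, X (d.toMultiset.toList.get (Fin.cast hlen.symm j))
      = (d.toMultiset.toList.map (X (R := ℝ))).prod := by
    rw [← List.ofFn_getElem_eq_map, List.prod_ofFn]
    exact Fintype.prod_equiv (finCongr hlen.symm) _ _ (fun j => by
      simp [List.get_eq_getElem])
  rw [h1, ← Multiset.prod_coe, ← Multiset.map_coe, Multiset.coe_toList,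
    Finsupp.toMultiset_map, Finsupp.prod_toMultiset,
    Finsupp.prod_mapDomain_index_inj (MvPolynomial.X_injective)]
  rw [← prod_X_pow_eq_monomial]
  rfl

lemma monomial_repSet_nonempty {k : ℕ} (d : Ω →₀ ℕ) (c : ℝ) (hd : d.degree = k + 1) :
    (repSet ρ (k + 1) (monomial d c)).Nonempty := by
  obtain ⟨g, hg⟩ := exists_prod_X d hd
  set xg : Fin (k + 1) → ↥(Vars Ω) := fun j => ⟨X (g j), X_mem_Vars (g j)⟩ with hxg
  refine ⟨ρ (c • xg 0) * ∏ j : Fin k, ρ (xg j.succ),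
    1, fun _ => Fin.cons (c • xg 0) (fun j => xg j.succ), ?_, ?_⟩
  · rw [Fin.sum_univ_one, Fin.prod_univ_succ]
    have : (monomial d c) = c • ∏ j : Fin (k+1), X (g j) := by
      rw [← hg]; rw [smul_monomial]; simp
    rw [this, Fin.prod_univ_succ]
    simp [hxg, smul_mul_assoc]
  · rw [Fin.sum_univ_one, Fin.prod_univ_succ]
    simp

lemma repSet_nonempty {k : ℕ} {h : MvPolynomial Ω ℝ} (hk : k ≠ 0)
    (hh : h.IsHomogeneous k) : (repSet ρ k h).Nonempty := by
  obtain ⟨k, rfl⟩ := Nat.exists_eq_succ_of_ne_zero hk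
  have := Finset.sum_induction (fun d => monomial d (coeff d h))
    (fun q => (repSet ρ (k + 1) q).Nonempty)
    (fun a b ⟨r₁, h1⟩ ⟨r₂, h2⟩ => ⟨r₁ + r₂, add_mem_repSet h1 h2⟩)
    ⟨0, zero_mem_repSet _⟩
    (fun d hd => monomial_repSet_nonempty d _ (by
      rw [Finsupp.degree_eq_weight_one]
      exact hh (mem_support_iff.mp hd)))
  rwa [support_sum_monomial_coeff] at this

lemma Q_add_le {k : ℕ} {h₁ h₂ : MvPolynomial Ω ℝ} (hk : k ≠ 0)
    (hh₁ : h₁.IsHomogeneous k) (hh₂ : h₂.IsHomogeneous k) :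
    projExtHomog ρ k (h₁ + h₂) ≤ projExtHomog ρ k h₁ + projExtHomog ρ k h₂ := by
  refine le_of_forall_pos_le_add fun ε hε => ?_
  obtain ⟨r₁, hr₁, hlt₁⟩ :=
    Real.lt_sInf_add_pos (repSet_nonempty (ρ := ρ) hk hh₁) (half_pos hε)
  obtain ⟨r₂, hr₂, hlt₂⟩ :=
    Real.lt_sInf_add_pos (repSet_nonempty (ρ := ρ) hk hh₂) (half_pos hε)
  have := Q_le_of_mem (add_mem_repSet hr₁ hr₂)
  rw [← projExtHomog_def] at hlt₁ hlt₂
  linarith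

lemma Q_smul {k : ℕ} {h : MvPolynomial Ω ℝ} (c : ℝ) (hk : k ≠ 0)
    (hh : h.IsHomogeneous k) :
    projExtHomog ρ k (c • h) = |c| * projExtHomog ρ k h := by
  obtain ⟨k, rfl⟩ := Nat.exists_eq_succ_of_ne_zero hk
  have key : ∀ (c : ℝ) (h : MvPolynomial Ω ℝ), h.IsHomogeneous (k + 1) →
      projExtHomog ρ (k + 1) (c • h) ≤ |c| * projExtHomog ρ (k + 1) h := by
    intro c h hh
    rcases eq_or_ne c 0 with rfl | hc
    · simp [Q_zero, Q_nonneg]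
    · have hcpos : (0 : ℝ) < |c| := abs_pos.mpr hc
      rw [← div_le_iff₀' hcpos]
      refine le_csInf (repSet_nonempty k.succ_ne_zero hh) fun r hr => ?_
      rw [div_le_iff₀' hcpos]
      exact Q_le_of_mem (smul_mem_repSet c hr)
  rcases eq_or_ne c 0 with rfl | hc
  · simp [Q_zero]
  · refine le_antisymm (key c h hh) ?_
    have h2 := key c⁻¹ (c • h) (((homogeneousSubmodule Ω ℝ (k+1)).smul_mem c hh : _))
    rw [inv_smul_smul₀ hc] at h2
    have hcpos : (0 : ℝ) < |c| := abs_pos.mpr hc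
    rw [abs_inv] at h2
    calc |c| * projExtHomog ρ (k+1) h
        ≤ |c| * (|c|⁻¹ * projExtHomog ρ (k+1) (c • h)) := by
          exact mul_le_mul_of_nonneg_left h2 (abs_nonneg c)
      _ = projExtHomog ρ (k+1) (c • h) := by field_simp

lemma Q_mul_le {k l : ℕ} {h₁ h₂ : MvPolynomial Ω ℝ} (hk : k ≠ 0) (hl : l ≠ 0)
    (hh₁ : h₁.IsHomogeneous k) (hh₂ : h₂.IsHomogeneous l) :
    projExtHomog ρ (k + l) (h₁ * h₂) ≤ projExtHomog ρ k h₁ * projExtHomog ρ l h₂ := by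
  have ne₁ := repSet_nonempty (ρ := ρ) hk hh₁
  have ne₂ := repSet_nonempty (ρ := ρ) hl hh₂
  have step : ∀ r₂ ∈ repSet ρ l h₂,
      projExtHomog ρ (k + l) (h₁ * h₂) ≤ projExtHomog ρ k h₁ * r₂ := by
    intro r₂ hr₂
    rcases (nonneg_of_mem hr₂).eq_or_lt with heq | hpos
    · obtain ⟨r₁, hr₁⟩ := ne₁
      have := Q_le_of_mem (mul_mem_repSet hr₁ hr₂)
      rw [← heq] at this ⊢
      simpa using this
    · rw [← div_le_iff₀ hpos]
      refine le_csInf ne₁ fun r₁ hr₁ => ?_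
      rw [div_le_iff₀ hpos]
      exact Q_le_of_mem (mul_mem_repSet hr₁ hr₂)
  rcases (Q_nonneg (ρ := ρ) k h₁).eq_or_lt with heq | hpos
  · obtain ⟨r₂, hr₂⟩ := ne₂
    have := step r₂ hr₂
    rw [← heq] at this ⊢
    simpa [nonneg_of_mem hr₂] using this
    
  · rw [← div_le_iff₀' hpos]
    refine le_csInf ne₂ fun r₂ hr₂ => ?_
    rw [div_le_iff₀' hpos]
    exact step r₂ hr₂

variable (ρ)

lemma pe_nonneg (h : MvPolynomial Ω ℝ) : 0 ≤ projExt ρ h :=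
  add_nonneg (abs_nonneg _) (Finset.sum_nonneg fun k _ => Q_nonneg k _)

lemma pe_zero : projExt ρ (0 : MvPolynomial Ω ℝ) = 0 := by
  simp [projExt]

lemma pe_C (a : ℝ) : projExt ρ (C a : MvPolynomial Ω ℝ) = |a| := by
  simp [projExt, totalDegree_C]

lemma pe_eq {M : ℕ} {h : MvPolynomial Ω ℝ} (hM : h.totalDegree ≤ M) :
    projExt ρ h = |coeff 0 h| +
      ∑ k ∈ Finset.Icc 1 M, projExtHomog ρ k (homogeneousComponent k h) := by
  unfold projExt
  congr 1
  refine Finset.sum_subset (Finset.Icc_subset_Icc_right hM) fun k hk hnk => ?_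
  simp only [Finset.mem_Icc] at hk hnk
  rw [homogeneousComponent_eq_zero _ _ (by omega), Q_zero]

lemma pe_homog {k : ℕ} {h : MvPolynomial Ω ℝ} (hk : k ≠ 0) (hh : h.IsHomogeneous k) :
    projExt ρ h = projExtHomog ρ k h := by
  by_cases h0 : h = 0
  · rw [h0, pe_zero, Q_zero]
  · have hdeg : h.totalDegree = k := hh.totalDegree h0
    have hc0 : coeff 0 h = 0 := hh.coeff_eq_zero (by simp [Finsupp.degree]; omega)
    rw [pe_eq ρ hdeg.le, hc0, abs_zero, zero_add]
    rw [Finset.sum_eq_single_of_mem k (Finset.mem_Icc.mpr ⟨Nat.one_le_iff_ne_zero.mpr hk, le_rfl⟩)]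
    · rw [homogeneousComponent_of_mem hh, if_pos rfl]
    · intro m _ hm
      rw [homogeneousComponent_of_mem hh, if_neg hm, Q_zero]

lemma pe_smul (c : ℝ) (h : MvPolynomial Ω ℝ) :
    projExt ρ (c • h) = |c| * projExt ρ h := by
  rw [pe_eq ρ (totalDegree_smul_le c h), pe_eq ρ (le_refl h.totalDegree)]
  rw [mul_add, Finset.mul_sum]
  congr 1
  · rw [MvPolynomial.coeff_smul, smul_eq_mul, abs_mul]
  · refine Finset.sum_congr rfl fun k hk => ?_
    rw [map_smul, Q_smul c (by simp at hk; omega) (homogeneousComponent_isHomogeneous k h)]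

lemma pe_add (f g : MvPolynomial Ω ℝ) :
    projExt ρ (f + g) ≤ projExt ρ f + projExt ρ g := by
  set M := max f.totalDegree g.totalDegree with hM
  rw [pe_eq ρ ((totalDegree_add f g).trans le_rfl),
    pe_eq ρ (le_max_left f.totalDegree g.totalDegree : f.totalDegree ≤ M),
    pe_eq ρ (le_max_right f.totalDegree g.totalDegree : g.totalDegree ≤ M)]
  rw [add_add_add_comm, ← Finset.sum_add_distrib]
  refine add_le_add ?_ (Finset.sum_le_sum fun k hk => ?_)
  · rw [coeff_add]; exact abs_add_le _ _
  · rw [map_add]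
    exact Q_add_le (by simp at hk; omega) (homogeneousComponent_isHomogeneous k f)
      (homogeneousComponent_isHomogeneous k g)

lemma pe_sum_le {ι : Type*} (s : Finset ι) (F : ι → MvPolynomial Ω ℝ) :
    projExt ρ (∑ i ∈ s, F i) ≤ ∑ i ∈ s, projExt ρ (F i) := by
  classical
  induction s using Finset.induction_on with
  | empty => simp [pe_zero]
  | insert x s hx ih =>
    rw [Finset.sum_insert hx, Finset.sum_insert hx]
    exact (pe_add ρ _ _).trans (add_le_add_right ih _)

lemma pe_hc_sum {M : ℕ} {h : MvPolynomial Ω ℝ} (hM : h.totalDegree ≤ M) :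
    ∑ k ∈ Finset.range (M + 1), projExt ρ (homogeneousComponent k h) = projExt ρ h := by
  have hrange : Finset.range (M + 1) = insert 0 (Finset.Icc 1 M) := by
    ext m; simp; omega
  rw [hrange, Finset.sum_insert (by simp), homogeneousComponent_zero, pe_C, pe_eq ρ hM]
  congr 1
  exact Finset.sum_congr rfl fun k hk =>
    pe_homog ρ (by simp at hk; omega) (homogeneousComponent_isHomogeneous k h)

lemma pe_mul_hc (f g : MvPolynomial Ω ℝ) (k l : ℕ) :
    projExt ρ (homogeneousComponent k f * homogeneousComponent l g) ≤
      projExt ρ (homogeneousComponent k f) * projExt ρ (homogeneousComponent l g) := by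
  rcases Nat.eq_zero_or_pos k with rfl | hk
  · rw [homogeneousComponent_zero, ← smul_eq_C_mul, pe_smul, pe_C]
  rcases Nat.eq_zero_or_pos l with rfl | hl
  · rw [homogeneousComponent_zero, mul_comm, ← smul_eq_C_mul, pe_smul, pe_C, mul_comm]
  rw [pe_homog ρ (by omega : k + l ≠ 0)
      ((homogeneousComponent_isHomogeneous k f).mul (homogeneousComponent_isHomogeneous l g)),
    pe_homog ρ (by omega : k ≠ 0) (homogeneousComponent_isHomogeneous k f),
    pe_homog ρ (by omega : l ≠ 0) (homogeneousComponent_isHomogeneous l g)]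
  exact Q_mul_le (by omega) (by omega) (homogeneousComponent_isHomogeneous k f)
    (homogeneousComponent_isHomogeneous l g)

lemma pe_mul (f g : MvPolynomial Ω ℝ) :
    projExt ρ (f * g) ≤ projExt ρ f * projExt ρ g := by
  conv_lhs => rw [← sum_homogeneousComponent f, ← sum_homogeneousComponent g]
  rw [Finset.sum_mul_sum]
  calc projExt ρ (∑ k ∈ Finset.range (f.totalDegree + 1), ∑ l ∈ Finset.range (g.totalDegree + 1),
        homogeneousComponent k f * homogeneousComponent l g)
      ≤ ∑ k ∈ Finset.range (f.totalDegree + 1), ∑ l ∈ Finset.range (g.totalDegree + 1),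
        projExt ρ (homogeneousComponent k f * homogeneousComponent l g) :=
        (pe_sum_le ρ _ _).trans (Finset.sum_le_sum fun k _ => pe_sum_le ρ _ _)
    _ ≤ ∑ k ∈ Finset.range (f.totalDegree + 1), ∑ l ∈ Finset.range (g.totalDegree + 1),
        projExt ρ (homogeneousComponent k f) * projExt ρ (homogeneousComponent l g) :=
        Finset.sum_le_sum fun k _ => Finset.sum_le_sum fun l _ => pe_mul_hc ρ f g k l
    _ = projExt ρ f * projExt ρ g := by
        rw [← Finset.sum_mul_sum, pe_hc_sum ρ le_rfl, pe_hc_sum ρ le_rfl]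

lemma coe_isHomogeneous (v : ↥(Vars Ω)) : (v : MvPolynomial Ω ℝ).IsHomogeneous 1 := by
  have : Vars Ω ≤ homogeneousSubmodule Ω ℝ 1 := by
    rw [Vars, Submodule.span_le]
    rintro - ⟨i, rfl⟩
    exact isHomogeneous_X ℝ i
  exact this v.2

lemma pe_coe (v : ↥(Vars Ω)) : projExt ρ (v : MvPolynomial Ω ℝ) = ρ v := by
  rw [pe_homog ρ one_ne_zero (coe_isHomogeneous v)]
  refine le_antisymm (Q_le_of_mem ⟨1, fun _ _ => v, by simp, by simp⟩) ?_
  refine le_csInf ⟨ρ v, 1, fun _ _ => v, by simp, by simp⟩ ?_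
  rintro r ⟨N, f, hf, rfl⟩
  have hv : v = ∑ i, f i 0 := by
    apply Subtype.coe_injective
    push_cast
    rw [hf]
    exact Finset.sum_congr rfl fun i _ => Fin.prod_univ_one _
  have hsum : ∀ (m : ℕ) (g : Fin m → ↥(Vars Ω)), ρ (∑ i, g i) ≤ ∑ i, ρ (g i) := by
    intro m
    induction m with
    | zero => intro g; simp
    | succ n ih =>
      intro g
      rw [Fin.sum_univ_succ, Fin.sum_univ_succ]
      exact (map_add_le_add ρ _ _).trans (add_le_add_right (ih _) _)
  calc ρ v ≤ ∑ i, ρ (f i 0) := by rw [hv]; exact hsum N _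
    _ = ∑ i, ∏ j, ρ (f i j) := by
      refine Finset.sum_congr rfl fun i _ => ?_
      simp

end ProjExtAux

/-- **The projective extension is a submultiplicative seminorm extending `ρ`.**
For any seminorm `ρ` on the span `V` of the variables of `A = ℝ[x_i : i ∈ Ω]`, the
projective extension `ρ̄` is absolutely homogeneous, subadditive (hence a seminorm on
`A`), submultiplicative, and restricts to `ρ` on `V`. -/
theorem projExt_submult_seminorm (Ω : Type*) (ρ : Seminorm ℝ ↥(Vars Ω)) :
    (∀ (c : ℝ) (h : MvPolynomial Ω ℝ), projExt ρ (c • h) = |c| * projExt ρ h) ∧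
      (∀ f g : MvPolynomial Ω ℝ, projExt ρ (f + g) ≤ projExt ρ f + projExt ρ g) ∧
      (∀ f g : MvPolynomial Ω ℝ, projExt ρ (f * g) ≤ projExt ρ f * projExt ρ g) ∧
      (∀ v : ↥(Vars Ω), projExt ρ (v : MvPolynomial Ω ℝ) = ρ v) :=
  ⟨fun c h => ProjExtAux.pe_smul ρ c h, fun f g => ProjExtAux.pe_add ρ f g,
    fun f g => ProjExtAux.pe_mul ρ f g, fun v => ProjExtAux.pe_coe ρ v⟩
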